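/- Let ρ be a critical radius function on ℝ^d, 0 < α < d and θ ≥ 0. Suppose (p_t)_{t>0} is a measurable family of nonnegative kernels on ℝ^d × ℝ^d such that for some N > d − α + θ there is a constant C_N with p_t(x,y) ≤ C_N t^{−d/2} exp(−|x−y|²/(5t))(1 + √t/ρ(x))^{−N} for all t, x, y. Then there is a constant C, depending only on d, α, θ, N and C_N, such that for every locally integrable f and every x ∈ ℝ^d, ∫_0^∞ ∫_{ℝ^d \ B(x,ρ(x))} p_t(x,y) |f(y)| dy · t^{α/2−1} dt ≤ C · M_α^{ρ,θ} f(x). -/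

import Mathlib

open MeasureTheory Set Real ENNReal

noncomputable section

/-- `ℝ^d` with the Euclidean distance. -/
abbrev Ed (d : ℕ) : Type := EuclideanSpace ℝ (Fin d)

/-- The axis-parallel cube `Q(c, r)` with center `c` and side length `r`;
its Lebesgue measure `|Q|` is `r ^ d`. -/
def cube {d : ℕ} (c : Ed d) (r : ℝ) : Set (Ed d) := {y | ∀ i, |y i - c i| ≤ r / 2}

/-- `ψ_θ(Q) = (1 + r_Q / ρ(x_Q))^θ` for the cube with center `c` and side length `r`. -/
def psi {d : ℕ} (ρ : Ed d → ℝ) (θ : ℝ) (c : Ed d) (r : ℝ) : ℝ := (1 + r / ρ c) ^ θ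

/-- A critical radius function with constants `C₀ ≥ 1`, `N₀ > 0`. -/
structure IsCriticalRadius {d : ℕ} (ρ : Ed d → ℝ) (C₀ N₀ : ℝ) : Prop where
  one_le_C₀ : 1 ≤ C₀
  N₀_pos : 0 < N₀
  pos : ∀ x, 0 < ρ x
  lower : ∀ x y, C₀⁻¹ * ρ x * (1 + dist x y / ρ x) ^ (-N₀) ≤ ρ y
  upper : ∀ x y, ρ y ≤ C₀ * ρ x * (1 + dist x y / ρ x) ^ (N₀ / (N₀ + 1))

/-- A weight: measurable, a.e. positive (hence a.e. finite) and locally integrable. -/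
def IsWeight {d : ℕ} (ω : Ed d → ℝ) : Prop :=
  Measurable ω ∧ (∀ᵐ x ∂(volume : Measure (Ed d)), 0 < ω x) ∧ LocallyIntegrable ω

/-- The fractional maximal operator `M_α^{ρ,θ} f(x) =
`sup_{Q ∋ x} (ψ_θ(Q) |Q|^{1-α/d})⁻¹ ∫_Q |f|`, with values in `ℝ≥0∞`.
`M^{ρ,θ}` is `Mfrac ρ θ 0`. -/
def Mfrac {d : ℕ} (ρ : Ed d → ℝ) (θ α : ℝ) (f : Ed d → ℝ) (x : Ed d) : ℝ≥0∞ :=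
  ⨆ (c : Ed d) (r : ℝ) (_ : 0 < r) (_ : x ∈ cube c r),
    ENNReal.ofReal ((psi ρ θ c r * (r ^ (d : ℝ)) ^ (1 - α / d))⁻¹ * ∫ y in cube c r, |f y|)

section AUXLEMMAS

lemma aux_exp {m u : ℝ} (hm : 0 < m) (hu : 0 < u) :
    Real.exp (-u) ≤ Real.exp (m * (Real.log m - 1)) * u ^ (-m) := by
  rw [Real.rpow_def_of_pos hu, ← Real.exp_add, Real.exp_le_exp]
  have h := Real.log_le_sub_one_of_pos (show 0 < u / m by positivity)
  rw [Real.log_div hu.ne' hm.ne'] at h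
  have h2 : (Real.log u - Real.log m) * m ≤ u - m := by
    have h3 := mul_le_mul_of_nonneg_right h hm.le
    have h4 : u / m * m = u := div_mul_cancel₀ u hm.ne'
    nlinarith [h3, h4]
  nlinarith [h2]

lemma aux_Ioc {γ T : ℝ} (hγ : 0 < γ) (hT : 0 < T) :
    ∫⁻ t in Ioc (0:ℝ) T, ENNReal.ofReal (t ^ (γ - 1)) = ENNReal.ofReal (T ^ γ / γ) := by
  have hi : IntegrableOn (fun t : ℝ => t ^ (γ - 1)) (Ioc 0 T) := by
    have := intervalIntegral.intervalIntegrable_rpow' (a := 0) (b := T)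
      (show (-1:ℝ) < γ - 1 by linarith)
    rwa [intervalIntegrable_iff_integrableOn_Ioc_of_le hT.le] at this
  rw [← ofReal_integral_eq_lintegral_ofReal hi
    (ae_restrict_of_forall_mem measurableSet_Ioc fun t ht => Real.rpow_nonneg ht.1.le _)]
  congr 1
  rw [← intervalIntegral.integral_of_le hT.le, integral_rpow (Or.inl (by linarith)),
    sub_add_cancel, Real.zero_rpow hγ.ne']
  ring

lemma aux_Ioi {δ T : ℝ} (hδ : δ < 0) (hT : 0 < T) :
    ∫⁻ t in Ioi T, ENNReal.ofReal (t ^ (δ - 1)) = ENNReal.ofReal (T ^ δ / (-δ)) := by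
  rw [← ofReal_integral_eq_lintegral_ofReal
    (integrableOn_Ioi_rpow_of_lt (show δ - 1 < -1 by linarith) hT)
    (ae_restrict_of_forall_mem measurableSet_Ioi fun t ht =>
      Real.rpow_nonneg (hT.trans ht).le _)]
  congr 1
  rw [integral_Ioi_rpow_of_lt (by linarith) hT, sub_add_cancel]
  ring

lemma coord_le {d : ℕ} (y x : Ed d) (i : Fin d) : |y i - x i| ≤ dist y x := by
  rw [EuclideanSpace.dist_eq, show |y i - x i| = Real.sqrt ((y i - x i)^2) by
    rw [Real.sqrt_sq_eq_abs]]
  apply Real.sqrt_le_sqrt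
  have := Finset.single_le_sum (f := fun j => dist (y j) (x j) ^ 2)
    (fun j _ => sq_nonneg _) (Finset.mem_univ i)
  simpa [Real.dist_eq] using this

lemma cube_compact {d : ℕ} (c : Ed d) (r : ℝ) : IsCompact (cube c r) := by
  apply Metric.isCompact_of_isClosed_isBounded
  · have : cube c r = ⋂ i, {y : Ed d | |y i - c i| ≤ r / 2} := by
      ext y; simp [cube, Set.mem_iInter]
    rw [this]
    refine isClosed_iInter fun i => ?_
    have hc : Continuous fun y : Ed d => |y i - c i| := by
      apply Continuous.abs
      exact ((continuous_apply i).comp (PiLp.continuous_ofLp 2 _)).sub continuous_const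
    exact isClosed_le hc continuous_const
  · apply (Metric.isBounded_closedBall (x := c) (r := |r| / 2 * Real.sqrt d)).subset
    intro y hy
    rw [Metric.mem_closedBall, EuclideanSpace.dist_eq]
    have hsum : ∑ i, dist (y i) (c i) ^ 2 ≤ (d : ℝ) * (|r| / 2) ^ 2 := by
      have : (d : ℝ) * (|r| / 2) ^ 2 = ∑ _i : Fin d, (|r| / 2) ^ 2 := by
        simp [Finset.sum_const, Finset.card_univ]
      rw [this]
      apply Finset.sum_le_sum
      intro i _
      rw [Real.dist_eq]
      have h1 : |y i - c i| ≤ |r| / 2 := (hy i).trans (by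
        have := le_abs_self r; linarith)
      exact pow_le_pow_left₀ (abs_nonneg _) h1 2
    calc Real.sqrt (∑ i, dist (y i) (c i) ^ 2) ≤ Real.sqrt ((d : ℝ) * (|r| / 2) ^ 2) :=
          Real.sqrt_le_sqrt hsum
      _ = |r| / 2 * Real.sqrt d := by
          rw [Real.sqrt_mul (by positivity), Real.sqrt_sq (by positivity)]; ring

lemma exists_k {ρ₀ s : ℝ} (hρ : 0 < ρ₀) (hs : ρ₀ ≤ s) :
    ∃ k : ℕ, 2 ^ (k : ℝ) * ρ₀ ≤ s ∧ s < 2 * (2 ^ (k : ℝ) * ρ₀) := by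
  have hu : (1:ℝ) ≤ s / ρ₀ := (one_le_div hρ).2 hs
  have hupos : 0 < s / ρ₀ := lt_of_lt_of_le one_pos hu
  refine ⟨⌊Real.logb 2 (s / ρ₀)⌋₊, ?_, ?_⟩
  · have h1 : (⌊Real.logb 2 (s / ρ₀)⌋₊ : ℝ) ≤ Real.logb 2 (s / ρ₀) :=
      Nat.floor_le (Real.logb_nonneg one_lt_two hu)
    have h2 : (2:ℝ) ^ (⌊Real.logb 2 (s / ρ₀)⌋₊ : ℝ) ≤ s / ρ₀ := by
      calc (2:ℝ) ^ (⌊Real.logb 2 (s / ρ₀)⌋₊ : ℝ) ≤ 2 ^ Real.logb 2 (s / ρ₀) :=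
            Real.rpow_le_rpow_of_exponent_le one_le_two h1
        _ = s / ρ₀ := Real.rpow_logb two_pos (by norm_num) hupos
    calc 2 ^ (⌊Real.logb 2 (s / ρ₀)⌋₊ : ℝ) * ρ₀ ≤ s / ρ₀ * ρ₀ :=
          mul_le_mul_of_nonneg_right h2 hρ.le
      _ = s := div_mul_cancel₀ s hρ.ne'
  · have h1 : Real.logb 2 (s / ρ₀) < ⌊Real.logb 2 (s / ρ₀)⌋₊ + 1 := Nat.lt_floor_add_one _
    have h2 : s / ρ₀ < (2:ℝ) ^ ((⌊Real.logb 2 (s / ρ₀)⌋₊ : ℝ) + 1) := by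
      calc s / ρ₀ = 2 ^ Real.logb 2 (s / ρ₀) := (Real.rpow_logb two_pos (by norm_num) hupos).symm
        _ < 2 ^ ((⌊Real.logb 2 (s / ρ₀)⌋₊ : ℝ) + 1) :=
            Real.rpow_lt_rpow_of_exponent_lt one_lt_two (by exact_mod_cast h1)
    have h3 : (2:ℝ) ^ ((⌊Real.logb 2 (s / ρ₀)⌋₊ : ℝ) + 1) = 2 * 2 ^ (⌊Real.logb 2 (s / ρ₀)⌋₊ : ℝ) := by
      rw [Real.rpow_add two_pos, Real.rpow_one]; ring
    calc s = s / ρ₀ * ρ₀ := (div_mul_cancel₀ s hρ.ne').symm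
      _ < 2 ^ ((⌊Real.logb 2 (s / ρ₀)⌋₊ : ℝ) + 1) * ρ₀ := mul_lt_mul_of_pos_right h2 hρ
      _ = 2 * (2 ^ (⌊Real.logb 2 (s / ρ₀)⌋₊ : ℝ) * ρ₀) := by rw [h3]; ring

lemma le_Mfrac {d : ℕ} (ρ : Ed d → ℝ) (θ α : ℝ) (f : Ed d → ℝ) (hf : LocallyIntegrable f)
    (x c : Ed d) (r : ℝ) (hr : 0 < r) (hx : x ∈ cube c r) (hρc : 0 < ρ c) :
    ∫⁻ y in cube c r, ENNReal.ofReal |f y| ≤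
      ENNReal.ofReal (psi ρ θ c r * (r ^ (d : ℝ)) ^ (1 - α / d)) * Mfrac ρ θ α f x := by
  have hint : IntegrableOn f (cube c r) := hf.integrableOn_isCompact (cube_compact c r)
  have h1 : ∫⁻ y in cube c r, ENNReal.ofReal |f y| = ENNReal.ofReal (∫ y in cube c r, |f y|) :=
    (ofReal_integral_eq_lintegral_ofReal hint.abs
      (Filter.Eventually.of_forall fun y => abs_nonneg _)).symm
  have hcpos : 0 < psi ρ θ c r * (r ^ (d : ℝ)) ^ (1 - α / d) := by
    apply _root_.mul_pos
    · exact Real.rpow_pos_of_pos (by positivity) _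
    · exact Real.rpow_pos_of_pos (Real.rpow_pos_of_pos hr _) _
  rw [h1]
  calc ENNReal.ofReal (∫ y in cube c r, |f y|)
      = ENNReal.ofReal ((psi ρ θ c r * (r ^ (d : ℝ)) ^ (1 - α / d)) *
          ((psi ρ θ c r * (r ^ (d : ℝ)) ^ (1 - α / d))⁻¹ * ∫ y in cube c r, |f y|)) := by
        rw [← mul_assoc, mul_inv_cancel₀ hcpos.ne', one_mul]
    _ = ENNReal.ofReal (psi ρ θ c r * (r ^ (d : ℝ)) ^ (1 - α / d)) *
          ENNReal.ofReal ((psi ρ θ c r * (r ^ (d : ℝ)) ^ (1 - α / d))⁻¹ * ∫ y in cube c r, |f y|) :=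
        ENNReal.ofReal_mul hcpos.le
    _ ≤ ENNReal.ofReal (psi ρ θ c r * (r ^ (d : ℝ)) ^ (1 - α / d)) * Mfrac ρ θ α f x := by
        apply mul_le_mul_right
        exact le_iSup_of_le c (le_iSup_of_le r (le_iSup_of_le hr (le_iSup_of_le hx le_rfl)))

lemma sq_rpow {x : ℝ} (hx : 0 ≤ x) (m : ℝ) : (x ^ 2) ^ m = x ^ (2 * m) := by
  rw [← Real.rpow_natCast x 2, ← Real.rpow_mul hx]
  norm_num

lemma bound_small {CN m N dd aa γ Rk ρ₀ t : ℝ} (hCN : 0 ≤ CN) (hm : 0 < m) (hN : 0 < N)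
    (hexp : -dd / 2 + m + (aa / 2 - 1) = γ - 1) (hRk : 0 < Rk) (hρ₀ : 0 < ρ₀) (ht : 0 < t) :
    CN * t ^ (-dd / 2) * Real.exp (-Rk ^ 2 / (5 * t)) * (1 + Real.sqrt t / ρ₀) ^ (-N) *
        t ^ (aa / 2 - 1)
      ≤ CN * Real.exp (m * (Real.log m - 1)) * (5 : ℝ) ^ m * Rk ^ (-(2 * m)) * t ^ (γ - 1) := by
  set Cm := Real.exp (m * (Real.log m - 1)) with hCmdef
  have hu : 0 < Rk ^ 2 / (5 * t) := by positivity
  have h1 : Real.exp (-Rk ^ 2 / (5 * t)) ≤ Cm * (Rk ^ 2 / (5 * t)) ^ (-m) := by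
    rw [neg_div]; exact aux_exp hm hu
  have h2 : (1 + Real.sqrt t / ρ₀) ^ (-N) ≤ 1 :=
    Real.rpow_le_one_of_one_le_of_nonpos (le_add_of_nonneg_right (by positivity)) (by linarith)
  have h3 : (Rk ^ 2 / (5 * t)) ^ (-m) = Rk ^ (-(2 * m)) * ((5 : ℝ) ^ m * t ^ m) := by
    rw [Real.div_rpow (by positivity) (by positivity), Real.rpow_neg (by positivity : (0:ℝ) ≤ Rk ^ 2),
      sq_rpow hRk.le, Real.rpow_neg (by positivity : (0:ℝ) ≤ 5 * t),
      Real.mul_rpow (by norm_num) ht.le]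
    rw [div_eq_mul_inv, inv_inv, ← Real.rpow_neg hRk.le]
  calc CN * t ^ (-dd / 2) * Real.exp (-Rk ^ 2 / (5 * t)) * (1 + Real.sqrt t / ρ₀) ^ (-N) *
        t ^ (aa / 2 - 1)
      ≤ CN * t ^ (-dd / 2) * (Cm * (Rk ^ 2 / (5 * t)) ^ (-m)) * 1 * t ^ (aa / 2 - 1) := by
        have hx1 : (0:ℝ) ≤ t ^ (-dd / 2) := Real.rpow_nonneg ht.le _
        have hx2 : (0:ℝ) ≤ t ^ (aa / 2 - 1) := Real.rpow_nonneg ht.le _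
        have hx3 : (0:ℝ) ≤ (1 + Real.sqrt t / ρ₀) ^ (-N) := Real.rpow_nonneg (by positivity) _
        have hx4 : (0:ℝ) ≤ Real.exp (-Rk ^ 2 / (5 * t)) := (Real.exp_pos _).le
        apply mul_le_mul_of_nonneg_right _ hx2
        apply mul_le_mul (mul_le_mul_of_nonneg_left h1 (by positivity)) h2 hx3
        positivity
    _ = CN * Cm * (5 : ℝ) ^ m * Rk ^ (-(2 * m)) * t ^ (γ - 1) := by
        rw [h3, show CN * t ^ (-dd / 2) * (Cm * (Rk ^ (-(2 * m)) * ((5:ℝ) ^ m * t ^ m))) * 1 *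
            t ^ (aa / 2 - 1)
          = CN * Cm * (5:ℝ) ^ m * Rk ^ (-(2 * m)) * (t ^ (-dd / 2) * t ^ m * t ^ (aa / 2 - 1))
          from by ring]
        rw [← Real.rpow_add ht, ← Real.rpow_add ht, hexp]

lemma bound_large {CN m N dd aa δ Rk ρ₀ t : ℝ} (hCN : 0 ≤ CN) (hm : 0 < m) (hN : 0 < N)
    (hexp : -dd / 2 + m + 1 / 2 * (-N) + (aa / 2 - 1) = δ - 1) (hRk : 0 < Rk) (hρ₀ : 0 < ρ₀)
    (ht : 0 < t) :
    CN * t ^ (-dd / 2) * Real.exp (-Rk ^ 2 / (5 * t)) * (1 + Real.sqrt t / ρ₀) ^ (-N) *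
        t ^ (aa / 2 - 1)
      ≤ CN * Real.exp (m * (Real.log m - 1)) * (5 : ℝ) ^ m * Rk ^ (-(2 * m)) * ρ₀ ^ N *
        t ^ (δ - 1) := by
  set Cm := Real.exp (m * (Real.log m - 1)) with hCmdef
  have hu : 0 < Rk ^ 2 / (5 * t) := by positivity
  have h1 : Real.exp (-Rk ^ 2 / (5 * t)) ≤ Cm * (Rk ^ 2 / (5 * t)) ^ (-m) := by
    rw [neg_div]; exact aux_exp hm hu
  have hsq : 0 < Real.sqrt t := Real.sqrt_pos.2 ht
  have h2 : (1 + Real.sqrt t / ρ₀) ^ (-N) ≤ ρ₀ ^ N * t ^ (1 / 2 * (-N)) := by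
    have hb : 0 < Real.sqrt t / ρ₀ := by positivity
    calc (1 + Real.sqrt t / ρ₀) ^ (-N) ≤ (Real.sqrt t / ρ₀) ^ (-N) :=
          Real.rpow_le_rpow_of_nonpos hb (by linarith) (by linarith)
      _ = ρ₀ ^ N * t ^ (1 / 2 * (-N)) := by
          rw [Real.div_rpow (Real.sqrt_nonneg t) hρ₀.le, Real.rpow_neg hρ₀.le,
            div_eq_mul_inv, inv_inv, Real.sqrt_eq_rpow, ← Real.rpow_mul ht.le]
          ring
  have h3 : (Rk ^ 2 / (5 * t)) ^ (-m) = Rk ^ (-(2 * m)) * ((5 : ℝ) ^ m * t ^ m) := by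
    rw [Real.div_rpow (by positivity) (by positivity), Real.rpow_neg (by positivity : (0:ℝ) ≤ Rk ^ 2),
      sq_rpow hRk.le, Real.rpow_neg (by positivity : (0:ℝ) ≤ 5 * t),
      Real.mul_rpow (by norm_num) ht.le]
    rw [div_eq_mul_inv, inv_inv, ← Real.rpow_neg hRk.le]
  calc CN * t ^ (-dd / 2) * Real.exp (-Rk ^ 2 / (5 * t)) * (1 + Real.sqrt t / ρ₀) ^ (-N) *
        t ^ (aa / 2 - 1)
      ≤ CN * t ^ (-dd / 2) * (Cm * (Rk ^ 2 / (5 * t)) ^ (-m)) * (ρ₀ ^ N * t ^ (1 / 2 * (-N))) *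
        t ^ (aa / 2 - 1) := by
        have hx2 : (0:ℝ) ≤ t ^ (aa / 2 - 1) := Real.rpow_nonneg ht.le _
        have hx3 : (0:ℝ) ≤ (1 + Real.sqrt t / ρ₀) ^ (-N) := Real.rpow_nonneg (by positivity) _
        apply mul_le_mul_of_nonneg_right _ hx2
        apply mul_le_mul (mul_le_mul_of_nonneg_left h1 (by positivity)) h2 hx3
        positivity
    _ = CN * Cm * (5 : ℝ) ^ m * Rk ^ (-(2 * m)) * ρ₀ ^ N * t ^ (δ - 1) := by
        rw [h3, show CN * t ^ (-dd / 2) * (Cm * (Rk ^ (-(2 * m)) * ((5:ℝ) ^ m * t ^ m))) *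
            (ρ₀ ^ N * t ^ (1 / 2 * (-N))) * t ^ (aa / 2 - 1)
          = CN * Cm * (5:ℝ) ^ m * Rk ^ (-(2 * m)) * ρ₀ ^ N *
            (t ^ (-dd / 2) * t ^ m * t ^ (1 / 2 * (-N)) * t ^ (aa / 2 - 1)) from by ring]
        rw [← Real.rpow_add ht, ← Real.rpow_add ht, ← Real.rpow_add ht, hexp]

lemma geom {θ dd aa m N A1 cgd γ : ℝ} (hθ : 0 ≤ θ) (hdd : 0 < dd)
    (hA1 : 0 ≤ A1) (hc : 0 ≤ cgd)
    (hρexp : dd - aa + -(2 * m) + 2 * γ = 0)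
    (hsexp : θ + (dd - aa) + -(2 * m) = (θ - N) / 2)
    {s ρ₀ : ℝ} (hs : 1 ≤ s) (hρ₀ : 0 < ρ₀) :
    (1 + 4 * (s * ρ₀) / ρ₀) ^ θ * ((4 * (s * ρ₀)) ^ dd) ^ (1 - aa / dd) *
        (A1 * (s * ρ₀) ^ (-(2 * m)) * (ρ₀ ^ (2 * γ) * cgd))
      ≤ (8 : ℝ) ^ θ * (4 : ℝ) ^ (dd - aa) * A1 * cgd * s ^ ((θ - N) / 2) := by
  have hs0 : (0:ℝ) < s := lt_of_lt_of_le one_pos hs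
  have h0 : 1 + 4 * (s * ρ₀) / ρ₀ = 1 + 4 * s := by field_simp
  have h1 : (1 + 4 * s) ^ θ ≤ (8 * s) ^ θ :=
    Real.rpow_le_rpow (by positivity) (by linarith) hθ
  have h2 : ((4 * (s * ρ₀)) ^ dd) ^ (1 - aa / dd) = (4 * (s * ρ₀)) ^ (dd - aa) := by
    rw [← Real.rpow_mul (by positivity)]
    congr 1
    rw [mul_one_sub, mul_div_cancel₀ _ hdd.ne']
  have e1 : (8 * s) ^ θ = (8:ℝ) ^ θ * s ^ θ := Real.mul_rpow (by norm_num) hs0.le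
  have e2 : (4 * (s * ρ₀)) ^ (dd - aa) = (4:ℝ) ^ (dd - aa) * (s ^ (dd - aa) * ρ₀ ^ (dd - aa)) := by
    rw [Real.mul_rpow (by norm_num) (by positivity), Real.mul_rpow hs0.le hρ₀.le]
  have e3 : (s * ρ₀) ^ (-(2 * m)) = s ^ (-(2 * m)) * ρ₀ ^ (-(2 * m)) :=
    Real.mul_rpow hs0.le hρ₀.le
  calc (1 + 4 * (s * ρ₀) / ρ₀) ^ θ * ((4 * (s * ρ₀)) ^ dd) ^ (1 - aa / dd) *
        (A1 * (s * ρ₀) ^ (-(2 * m)) * (ρ₀ ^ (2 * γ) * cgd))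
      = (1 + 4 * s) ^ θ * (4 * (s * ρ₀)) ^ (dd - aa) *
        (A1 * (s * ρ₀) ^ (-(2 * m)) * (ρ₀ ^ (2 * γ) * cgd)) := by rw [h0, h2]
    _ ≤ (8 * s) ^ θ * (4 * (s * ρ₀)) ^ (dd - aa) *
        (A1 * (s * ρ₀) ^ (-(2 * m)) * (ρ₀ ^ (2 * γ) * cgd)) := by
        apply mul_le_mul_of_nonneg_right (mul_le_mul_of_nonneg_right h1 (by positivity))
        have := Real.rpow_nonneg (mul_nonneg hs0.le hρ₀.le) (-(2*m))
        have := Real.rpow_nonneg hρ₀.le (2*γ)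
        positivity
    _ = (8:ℝ) ^ θ * (4:ℝ) ^ (dd - aa) * A1 * cgd * (s ^ θ * s ^ (dd - aa) * s ^ (-(2 * m))) *
        (ρ₀ ^ (dd - aa) * ρ₀ ^ (-(2 * m)) * ρ₀ ^ (2 * γ)) := by
        rw [e1, e2, e3]; ring
    _ = (8:ℝ) ^ θ * (4:ℝ) ^ (dd - aa) * A1 * cgd * s ^ ((θ - N) / 2) := by
        rw [← Real.rpow_add hs0, ← Real.rpow_add hs0, hsexp, ← Real.rpow_add hρ₀,
          ← Real.rpow_add hρ₀, hρexp, Real.rpow_zero, mul_one]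

end AUXLEMMAS

/-- Estimate (3.4): the "global" part of `L^{-α/2}` is pointwise dominated by the
fractional maximal function `M_α^{ρ,θ}`, provided the kernel decay order
`N > d - α + θ`. -/


theorem stmt11 {d : ℕ} (ρ : Ed d → ℝ) (C₀ N₀ : ℝ) (hρ : IsCriticalRadius ρ C₀ N₀)
    (α θ N CN : ℝ) (hα : 0 < α) (hαd : α < d) (hθ : 0 ≤ θ)
    (hN : (d : ℝ) - α + θ < N) (hCN : 0 < CN)
    (K : ℝ → Ed d → Ed d → ℝ)
    (hKmeas : Measurable fun pp : ℝ × Ed d × Ed d => K pp.1 pp.2.1 pp.2.2)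
    (hK0 : ∀ t x y, 0 ≤ K t x y)
    (hKb : ∀ t, 0 < t → ∀ x y,
      K t x y ≤ CN * t ^ (-(d : ℝ) / 2) * Real.exp (-(dist x y) ^ 2 / (5 * t)) *
        (1 + Real.sqrt t / ρ x) ^ (-N)) :
    ∃ C : ℝ, 0 < C ∧
      ∀ f : Ed d → ℝ, LocallyIntegrable f → ∀ x : Ed d,
        (∫⁻ t in Ioi (0 : ℝ),
            (∫⁻ y in (Metric.ball x (ρ x))ᶜ, ENNReal.ofReal (K t x y * |f y|)) *
              ENNReal.ofReal (t ^ (α / 2 - 1))) ≤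
          ENNReal.ofReal C * Mfrac ρ θ α f x := by
  have hd0 : (0:ℝ) < (d:ℝ) := lt_trans hα hαd
  have hN0 : 0 < N := by linarith
  have hNθ : θ < N := by linarith
  set γ : ℝ := (θ + N) / 4 with hγdef
  set δ : ℝ := (θ - N) / 4 with hδdef
  set m : ℝ := (θ + N) / 4 + ((d:ℝ) - α) / 2 with hmdef
  have hγ : 0 < γ := by rw [hγdef]; linarith
  have hδ : δ < 0 := by rw [hδdef]; linarith
  have hm : 0 < m := by rw [hmdef]; linarith
  set Cm : ℝ := Real.exp (m * (Real.log m - 1)) with hCmdef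
  have hCm : 0 < Cm := Real.exp_pos _
  set A1 : ℝ := CN * Cm * (5:ℝ) ^ m with hA1def
  have hA1 : 0 < A1 := by
    have : (0:ℝ) < (5:ℝ) ^ m := Real.rpow_pos_of_pos (by norm_num) m
    rw [hA1def]; positivity
  set cgd : ℝ := 1 / γ + 1 / (-δ) with hcgddef
  have hcgd : 0 < cgd := by
    rw [hcgddef]
    have h1 : 0 < 1 / γ := by positivity
    have h2 : 0 < 1 / (-δ) := by
      apply div_pos one_pos; linarith
    linarith
  set D : ℝ := (8:ℝ) ^ θ * (4:ℝ) ^ ((d:ℝ) - α) * A1 * cgd with hDdef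
  have hD : 0 < D := by
    have h8 : (0:ℝ) < (8:ℝ) ^ θ := Real.rpow_pos_of_pos (by norm_num) θ
    have h4 : (0:ℝ) < (4:ℝ) ^ ((d:ℝ) - α) := Real.rpow_pos_of_pos (by norm_num) _
    rw [hDdef]; positivity
  set q : ℝ := (2:ℝ) ^ ((θ - N) / 2) with hqdef
  have hq0 : 0 < q := Real.rpow_pos_of_pos two_pos _
  have hq1 : q < 1 := Real.rpow_lt_one_of_one_lt_of_neg one_lt_two (by linarith)
  have hCpos : 0 < D * (1 - q)⁻¹ := mul_pos hD (inv_pos.2 (by linarith))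
  refine ⟨D * (1 - q)⁻¹, hCpos, ?_⟩
  intro f hf x
  by_cases hM : Mfrac ρ θ α f x = ∞
  · rw [hM, ENNReal.mul_top (ENNReal.ofReal_pos.2 hCpos).ne']
    exact le_top
  set ρ₀ : ℝ := ρ x with hρ₀def
  have hρ₀ : 0 < ρ₀ := hρ.pos x
  set M := Mfrac ρ θ α f x with hMdef
  have hMfin : M < ⊤ := lt_top_iff_ne_top.2 hM
  -- exponent identities
  have hexp1 : -(d:ℝ) / 2 + m + (α / 2 - 1) = γ - 1 := by rw [hmdef, hγdef]; ring
  have hexp2 : -(d:ℝ) / 2 + m + 1 / 2 * (-N) + (α / 2 - 1) = δ - 1 := by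
    rw [hmdef, hδdef]; ring
  have hρexp : (d:ℝ) - α + -(2 * m) + 2 * γ = 0 := by rw [hmdef, hγdef]; ring
  have hsexp : θ + ((d:ℝ) - α) + -(2 * m) = (θ - N) / 2 := by rw [hmdef]; ring
  -- the annuli
  set R : ℕ → ℝ := fun k => 2 ^ (k:ℝ) * ρ₀ with hRdef
  have hRpos : ∀ k, 0 < R k := fun k => mul_pos (Real.rpow_pos_of_pos two_pos _) hρ₀
  set A : ℕ → Set (Ed d) := fun k => (Metric.ball x (R k))ᶜ ∩ Metric.ball x (2 * R k) with hAdef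
  set Q : ℕ → Set (Ed d) := fun k => cube x (4 * R k) with hQdef
  set J : ℕ → ℝ≥0∞ := fun k => ∫⁻ y in Q k, ENNReal.ofReal |f y| with hJdef
  set G : ℕ → ℝ → ℝ := fun k t => CN * t ^ (-(d:ℝ) / 2) * Real.exp (-R k ^ 2 / (5 * t)) *
    (1 + Real.sqrt t / ρ₀) ^ (-N) with hGdef
  have hG0 : ∀ k t, 0 < t → 0 ≤ G k t := by
    intro k t ht
    simp only [hGdef]
    have h1 : (0:ℝ) ≤ t ^ (-(d:ℝ) / 2) := Real.rpow_nonneg ht.le _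
    have h2 : (0:ℝ) ≤ (1 + Real.sqrt t / ρ₀) ^ (-N) := Real.rpow_nonneg (by positivity) _
    positivity
  -- covering
  have hcover : (Metric.ball x ρ₀)ᶜ ⊆ ⋃ k, A k := by
    intro y hy
    have hyx : ρ₀ ≤ dist y x := not_lt.1 (fun h => hy (Metric.mem_ball.2 h))
    obtain ⟨k, h1, h2⟩ := exists_k hρ₀ hyx
    refine mem_iUnion.2 ⟨k, ?_, ?_⟩
    · simp only [mem_compl_iff, Metric.mem_ball, not_lt, hRdef]; exact h1
    · simp only [Metric.mem_ball, hRdef]; exact h2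
  have hAmeas : ∀ k, MeasurableSet (A k) :=
    fun k => (measurableSet_ball.compl).inter measurableSet_ball
  -- J bounds
  have hJle : ∀ k, J k ≤
      ENNReal.ofReal (psi ρ θ x (4 * R k) * ((4 * R k) ^ (d:ℝ)) ^ (1 - α / ↑d)) * M := by
    intro k
    simp only [hJdef, hQdef]
    exact le_Mfrac ρ θ α f hf x x (4 * R k) (by have := hRpos k; positivity)
      (fun i => by rw [sub_self, abs_zero]; have := hRpos k; positivity) (hρ.pos x)
  have hJfin : ∀ k, J k ≠ ⊤ := by
    intro k
    exact ((hJle k).trans_lt (ENNReal.mul_lt_top ENNReal.ofReal_lt_top hMfin)).ne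
  -- kernel bound on annuli
  have hKG : ∀ k t, 0 < t → ∀ y ∈ A k, K t x y ≤ G k t := by
    intro k t ht y hy
    have hge : R k ≤ dist y x := by
      have := hy.1
      simp only [mem_compl_iff, Metric.mem_ball, not_lt] at this
      exact this
    have hb := hKb t ht x y
    rw [← hρ₀def] at hb
    refine hb.trans ?_
    simp only [hGdef]
    have h5 : R k ^ 2 ≤ dist x y ^ 2 := by
      rw [dist_comm]
      exact pow_le_pow_left₀ (hRpos k).le hge 2
    have h6 : -dist x y ^ 2 / (5 * t) ≤ -R k ^ 2 / (5 * t) :=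
      (div_le_div_iff_of_pos_right (show (0:ℝ) < 5 * t by positivity)).2 (neg_le_neg h5)
    exact mul_le_mul_of_nonneg_right
      (mul_le_mul_of_nonneg_left (Real.exp_le_exp.2 h6) (by positivity))
      (Real.rpow_nonneg (by positivity) _)
  -- inner integral bound
  have hinner : ∀ k t, 0 < t →
      (∫⁻ y in A k, ENNReal.ofReal (K t x y * |f y|)) ≤ ENNReal.ofReal (G k t) * J k := by
    intro k t ht
    calc ∫⁻ y in A k, ENNReal.ofReal (K t x y * |f y|)
        ≤ ∫⁻ y in A k, ENNReal.ofReal (G k t) * ENNReal.ofReal |f y| := by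
          refine lintegral_mono_ae (ae_restrict_of_forall_mem (hAmeas k) fun y hy => ?_)
          rw [← ENNReal.ofReal_mul (hG0 k t ht)]
          exact ENNReal.ofReal_le_ofReal
            (mul_le_mul_of_nonneg_right (hKG k t ht y hy) (abs_nonneg _))
      _ = ENNReal.ofReal (G k t) * ∫⁻ y in A k, ENNReal.ofReal |f y| :=
          lintegral_const_mul' _ _ ENNReal.ofReal_ne_top
      _ ≤ ENNReal.ofReal (G k t) * J k := by
          apply mul_le_mul_right
          simp only [hJdef, hQdef]
          apply lintegral_mono_set
          intro y hy
          intro i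
          have h1 : |y i - x i| ≤ dist y x := coord_le y x i
          have h2 : dist y x < 2 * R k := Metric.mem_ball.1 hy.2
          have : |y i - x i| ≤ 4 * R k / 2 := by linarith
          exact this
  -- pointwise-in-t bound
  have hptw : ∀ t ∈ Ioi (0:ℝ),
      (∫⁻ y in (Metric.ball x ρ₀)ᶜ, ENNReal.ofReal (K t x y * |f y|)) *
          ENNReal.ofReal (t ^ (α / 2 - 1))
        ≤ ∑' k, J k * ENNReal.ofReal (G k t * t ^ (α / 2 - 1)) := by
    intro t ht
    rw [mem_Ioi] at ht
    calc (∫⁻ y in (Metric.ball x ρ₀)ᶜ, ENNReal.ofReal (K t x y * |f y|)) *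
          ENNReal.ofReal (t ^ (α / 2 - 1))
        ≤ (∑' k, ENNReal.ofReal (G k t) * J k) * ENNReal.ofReal (t ^ (α / 2 - 1)) := by
          apply mul_le_mul_left
          calc (∫⁻ y in (Metric.ball x ρ₀)ᶜ, ENNReal.ofReal (K t x y * |f y|))
              ≤ ∫⁻ y in ⋃ k, A k, ENNReal.ofReal (K t x y * |f y|) :=
                lintegral_mono_set hcover
            _ ≤ ∑' k, ∫⁻ y in A k, ENNReal.ofReal (K t x y * |f y|) :=
                lintegral_iUnion_le _ _
            _ ≤ ∑' k, ENNReal.ofReal (G k t) * J k :=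
                ENNReal.tsum_le_tsum fun k => hinner k t ht
      _ = ∑' k, J k * ENNReal.ofReal (G k t * t ^ (α / 2 - 1)) := by
          rw [← ENNReal.tsum_mul_right]
          congr 1
          funext k
          rw [ENNReal.ofReal_mul (hG0 k t ht), mul_comm (ENNReal.ofReal (G k t)) (J k),
            mul_assoc]
  -- measurability in t
  have hmeasG : ∀ k, AEMeasurable (fun t : ℝ => J k * ENNReal.ofReal (G k t * t ^ (α / 2 - 1)))
      (volume.restrict (Ioi (0:ℝ))) := by
    intro k
    have hg : Measurable fun t : ℝ => J k * ENNReal.ofReal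
        (CN * Real.exp (Real.log t * (-(d:ℝ) / 2)) * Real.exp (-R k ^ 2 / (5 * t)) *
          Real.exp (Real.log (1 + Real.sqrt t / ρ₀) * (-N)) *
          Real.exp (Real.log t * (α / 2 - 1))) := by
      apply Measurable.const_mul
      apply Measurable.ennreal_ofReal
      apply Measurable.mul
      apply Measurable.mul
      apply Measurable.mul
      · exact (Real.measurable_exp.comp (Real.measurable_log.mul_const _)).const_mul CN
      · exact Real.measurable_exp.comp (measurable_const.div (measurable_id.const_mul (5:ℝ)))
      · exact Real.measurable_exp.comp
          ((Real.measurable_log.comp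
            (((Real.continuous_sqrt.measurable).div_const ρ₀).const_add 1)).mul_const _)
      · exact Real.measurable_exp.comp (Real.measurable_log.mul_const _)
    apply hg.aemeasurable.congr
    apply ae_restrict_of_forall_mem measurableSet_Ioi
    intro t ht
    rw [mem_Ioi] at ht
    have h1 : (0:ℝ) < 1 + Real.sqrt t / ρ₀ := by positivity
    simp only [hGdef]
    rw [← Real.rpow_def_of_pos ht, ← Real.rpow_def_of_pos ht, ← Real.rpow_def_of_pos h1]
  -- the t-integral bound
  have hI : ∀ k, (∫⁻ t in Ioi (0:ℝ), ENNReal.ofReal (G k t * t ^ (α / 2 - 1)))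
      ≤ ENNReal.ofReal (A1 * R k ^ (-(2 * m)) * (ρ₀ ^ (2 * γ) * cgd)) := by
    intro k
    have hT : (0:ℝ) < ρ₀ ^ (2:ℝ) := Real.rpow_pos_of_pos hρ₀ _
    have hA1R : (0:ℝ) ≤ A1 * R k ^ (-(2 * m)) :=
      mul_nonneg hA1.le (Real.rpow_nonneg (hRpos k).le _)
    have hA1Rρ : (0:ℝ) ≤ A1 * R k ^ (-(2 * m)) * ρ₀ ^ N :=
      mul_nonneg hA1R (Real.rpow_nonneg hρ₀.le _)
    have hle1 : (∫⁻ t in Ioc (0:ℝ) (ρ₀ ^ (2:ℝ)), ENNReal.ofReal (G k t * t ^ (α / 2 - 1)))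
        ≤ ENNReal.ofReal (A1 * R k ^ (-(2 * m)) * ((ρ₀ ^ (2:ℝ)) ^ γ / γ)) := by
      calc (∫⁻ t in Ioc (0:ℝ) (ρ₀ ^ (2:ℝ)), ENNReal.ofReal (G k t * t ^ (α / 2 - 1)))
          ≤ ∫⁻ t in Ioc (0:ℝ) (ρ₀ ^ (2:ℝ)),
              ENNReal.ofReal (A1 * R k ^ (-(2 * m)) * t ^ (γ - 1)) := by
            refine lintegral_mono_ae
              (ae_restrict_of_forall_mem measurableSet_Ioc fun t htt => ?_)
            apply ENNReal.ofReal_le_ofReal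
            have hb := bound_small (dd := (d:ℝ)) (aa := α) hCN.le hm hN0 hexp1
              (hRpos k) hρ₀ htt.1
            simp only [hGdef]
            refine le_trans hb (le_of_eq ?_)
            rw [hA1def, hCmdef]
        _ = ENNReal.ofReal (A1 * R k ^ (-(2 * m))) *
              ∫⁻ t in Ioc (0:ℝ) (ρ₀ ^ (2:ℝ)), ENNReal.ofReal (t ^ (γ - 1)) := by
            simp_rw [ENNReal.ofReal_mul hA1R]
            exact lintegral_const_mul' _ _ ENNReal.ofReal_ne_top
        _ = ENNReal.ofReal (A1 * R k ^ (-(2 * m))) * ENNReal.ofReal ((ρ₀ ^ (2:ℝ)) ^ γ / γ) := by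
            rw [aux_Ioc hγ hT]
        _ = ENNReal.ofReal (A1 * R k ^ (-(2 * m)) * ((ρ₀ ^ (2:ℝ)) ^ γ / γ)) := by
            rw [← ENNReal.ofReal_mul hA1R]
    have hle2 : (∫⁻ t in Ioi (ρ₀ ^ (2:ℝ)), ENNReal.ofReal (G k t * t ^ (α / 2 - 1)))
        ≤ ENNReal.ofReal (A1 * R k ^ (-(2 * m)) * ρ₀ ^ N * ((ρ₀ ^ (2:ℝ)) ^ δ / (-δ))) := by
      calc (∫⁻ t in Ioi (ρ₀ ^ (2:ℝ)), ENNReal.ofReal (G k t * t ^ (α / 2 - 1)))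
          ≤ ∫⁻ t in Ioi (ρ₀ ^ (2:ℝ)),
              ENNReal.ofReal (A1 * R k ^ (-(2 * m)) * ρ₀ ^ N * t ^ (δ - 1)) := by
            refine lintegral_mono_ae
              (ae_restrict_of_forall_mem measurableSet_Ioi fun t htt => ?_)
            apply ENNReal.ofReal_le_ofReal
            have ht0 : (0:ℝ) < t := lt_trans hT htt
            have hb := bound_large (dd := (d:ℝ)) (aa := α) hCN.le hm hN0 hexp2
              (hRpos k) hρ₀ ht0
            simp only [hGdef]
            refine le_trans hb (le_of_eq ?_)
            rw [hA1def, hCmdef]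
        _ = ENNReal.ofReal (A1 * R k ^ (-(2 * m)) * ρ₀ ^ N) *
              ∫⁻ t in Ioi (ρ₀ ^ (2:ℝ)), ENNReal.ofReal (t ^ (δ - 1)) := by
            simp_rw [ENNReal.ofReal_mul hA1Rρ]
            exact lintegral_const_mul' _ _ ENNReal.ofReal_ne_top
        _ = ENNReal.ofReal (A1 * R k ^ (-(2 * m)) * ρ₀ ^ N) *
              ENNReal.ofReal ((ρ₀ ^ (2:ℝ)) ^ δ / (-δ)) := by
            rw [aux_Ioi hδ hT]
        _ = ENNReal.ofReal (A1 * R k ^ (-(2 * m)) * ρ₀ ^ N * ((ρ₀ ^ (2:ℝ)) ^ δ / (-δ))) := by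
            rw [← ENNReal.ofReal_mul hA1Rρ]
    have key : A1 * R k ^ (-(2 * m)) * ((ρ₀ ^ (2:ℝ)) ^ γ / γ) +
        A1 * R k ^ (-(2 * m)) * ρ₀ ^ N * ((ρ₀ ^ (2:ℝ)) ^ δ / (-δ))
        = A1 * R k ^ (-(2 * m)) * (ρ₀ ^ (2 * γ) * cgd) := by
      have e1 : (ρ₀ ^ (2:ℝ)) ^ γ = ρ₀ ^ (2 * γ) := (Real.rpow_mul hρ₀.le 2 γ).symm
      have e2 : ρ₀ ^ N * (ρ₀ ^ (2:ℝ)) ^ δ = ρ₀ ^ (2 * γ) := by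
        rw [← Real.rpow_mul hρ₀.le, ← Real.rpow_add hρ₀]
        congr 1
        rw [hγdef, hδdef]; ring
      rw [e1, hcgddef]
      linear_combination (A1 * R k ^ (-(2 * m)) / (-δ)) * e2
    have hnn1 : (0:ℝ) ≤ A1 * R k ^ (-(2 * m)) * ((ρ₀ ^ (2:ℝ)) ^ γ / γ) := by
      apply mul_nonneg hA1R
      exact div_nonneg (Real.rpow_nonneg hT.le _) hγ.le
    calc (∫⁻ t in Ioi (0:ℝ), ENNReal.ofReal (G k t * t ^ (α / 2 - 1)))
        = (∫⁻ t in Ioc (0:ℝ) (ρ₀ ^ (2:ℝ)), ENNReal.ofReal (G k t * t ^ (α / 2 - 1))) +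
          ∫⁻ t in Ioi (ρ₀ ^ (2:ℝ)), ENNReal.ofReal (G k t * t ^ (α / 2 - 1)) := by
          rw [← lintegral_union measurableSet_Ioi (Ioc_disjoint_Ioi le_rfl),
            Ioc_union_Ioi_eq_Ioi hT.le]
      _ ≤ ENNReal.ofReal (A1 * R k ^ (-(2 * m)) * ((ρ₀ ^ (2:ℝ)) ^ γ / γ)) +
          ENNReal.ofReal (A1 * R k ^ (-(2 * m)) * ρ₀ ^ N * ((ρ₀ ^ (2:ℝ)) ^ δ / (-δ))) :=
          add_le_add hle1 hle2
      _ = ENNReal.ofReal (A1 * R k ^ (-(2 * m)) * (ρ₀ ^ (2 * γ) * cgd)) := by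
          rw [← ENNReal.ofReal_add hnn1 (by
            apply mul_nonneg hA1Rρ
            exact div_nonneg (Real.rpow_nonneg hT.le _) (by linarith)), key]
  -- geometric bound per k
  have hEk : ∀ k : ℕ,
      ENNReal.ofReal (psi ρ θ x (4 * R k) * ((4 * R k) ^ (d:ℝ)) ^ (1 - α / ↑d)) *
        ENNReal.ofReal (A1 * R k ^ (-(2 * m)) * (ρ₀ ^ (2 * γ) * cgd))
      ≤ ENNReal.ofReal (D * q ^ k) := by
    intro k
    have hpsipos : 0 ≤ psi ρ θ x (4 * R k) * ((4 * R k) ^ (d:ℝ)) ^ (1 - α / ↑d) := by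
      apply mul_nonneg
      · exact Real.rpow_nonneg (by
          have h1 : 0 ≤ 4 * R k / ρ x := by
            rw [← hρ₀def]; have := hRpos k; positivity
          linarith) _
      · exact Real.rpow_nonneg (Real.rpow_nonneg (by have := hRpos k; positivity) _) _
    rw [← ENNReal.ofReal_mul hpsipos]
    apply ENNReal.ofReal_le_ofReal
    have hs : (1:ℝ) ≤ 2 ^ ((k:ℕ):ℝ) := by
      calc (1:ℝ) = 2 ^ (0:ℝ) := (Real.rpow_zero 2).symm
        _ ≤ 2 ^ ((k:ℕ):ℝ) := Real.rpow_le_rpow_of_exponent_le one_le_two (Nat.cast_nonneg k)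
    have hgeom := geom (θ := θ) (dd := (d:ℝ)) (aa := α) (m := m) (N := N) (A1 := A1)
      (cgd := cgd) (γ := γ) hθ hd0 hA1.le hcgd.le hρexp hsexp hs hρ₀
    have hqk : ((2:ℝ) ^ ((k:ℕ):ℝ)) ^ ((θ - N) / 2) = q ^ k := by
      rw [hqdef, ← Real.rpow_natCast ((2:ℝ) ^ ((θ - N) / 2)) k,
        ← Real.rpow_mul (by norm_num : (0:ℝ) ≤ 2), ← Real.rpow_mul (by norm_num : (0:ℝ) ≤ 2)]
      congr 1
      ring
    calc psi ρ θ x (4 * R k) * ((4 * R k) ^ (d:ℝ)) ^ (1 - α / ↑d) *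
          (A1 * R k ^ (-(2 * m)) * (ρ₀ ^ (2 * γ) * cgd))
        = (1 + 4 * (2 ^ ((k:ℕ):ℝ) * ρ₀) / ρ₀) ^ θ *
            ((4 * (2 ^ ((k:ℕ):ℝ) * ρ₀)) ^ (d:ℝ)) ^ (1 - α / (d:ℝ)) *
            (A1 * (2 ^ ((k:ℕ):ℝ) * ρ₀) ^ (-(2 * m)) * (ρ₀ ^ (2 * γ) * cgd)) := by
          simp only [psi, hRdef, ← hρ₀def]
      _ ≤ (8:ℝ) ^ θ * (4:ℝ) ^ ((d:ℝ) - α) * A1 * cgd * ((2:ℝ) ^ ((k:ℕ):ℝ)) ^ ((θ - N) / 2) :=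
          hgeom
      _ = D * q ^ k := by rw [hqk, hDdef]
  -- assemble
  calc (∫⁻ t in Ioi (0 : ℝ),
        (∫⁻ y in (Metric.ball x ρ₀)ᶜ, ENNReal.ofReal (K t x y * |f y|)) *
          ENNReal.ofReal (t ^ (α / 2 - 1)))
      ≤ ∫⁻ t in Ioi (0:ℝ), ∑' k, J k * ENNReal.ofReal (G k t * t ^ (α / 2 - 1)) :=
        lintegral_mono_ae (ae_restrict_of_forall_mem measurableSet_Ioi hptw)
    _ = ∑' k, ∫⁻ t in Ioi (0:ℝ), J k * ENNReal.ofReal (G k t * t ^ (α / 2 - 1)) :=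
        lintegral_tsum fun k => hmeasG k
    _ = ∑' k, J k * ∫⁻ t in Ioi (0:ℝ), ENNReal.ofReal (G k t * t ^ (α / 2 - 1)) := by
        congr 1
        funext k
        exact lintegral_const_mul' _ _ (hJfin k)
    _ ≤ ∑' k, ENNReal.ofReal (D * q ^ k) * M := by
        apply ENNReal.tsum_le_tsum
        intro k
        calc J k * ∫⁻ t in Ioi (0:ℝ), ENNReal.ofReal (G k t * t ^ (α / 2 - 1))
            ≤ (ENNReal.ofReal (psi ρ θ x (4 * R k) * ((4 * R k) ^ (d:ℝ)) ^ (1 - α / ↑d)) * M) *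
              ENNReal.ofReal (A1 * R k ^ (-(2 * m)) * (ρ₀ ^ (2 * γ) * cgd)) :=
              mul_le_mul' (hJle k) (hI k)
          _ = (ENNReal.ofReal (psi ρ θ x (4 * R k) * ((4 * R k) ^ (d:ℝ)) ^ (1 - α / ↑d)) *
              ENNReal.ofReal (A1 * R k ^ (-(2 * m)) * (ρ₀ ^ (2 * γ) * cgd))) * M := by ring
          _ ≤ ENNReal.ofReal (D * q ^ k) * M := mul_le_mul_left (hEk k) M
    _ = ENNReal.ofReal (D * (1 - q)⁻¹) * M := by
        rw [ENNReal.tsum_mul_right]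
        congr 1
        calc ∑' k : ℕ, ENNReal.ofReal (D * q ^ k)
            = ∑' k : ℕ, ENNReal.ofReal D * ENNReal.ofReal q ^ k := by
              congr 1; funext k
              rw [ENNReal.ofReal_mul hD.le, ENNReal.ofReal_pow hq0.le]
          _ = ENNReal.ofReal D * (1 - ENNReal.ofReal q)⁻¹ := by
              rw [ENNReal.tsum_mul_left, ENNReal.tsum_geometric]
          _ = ENNReal.ofReal (D * (1 - q)⁻¹) := by
              rw [← ENNReal.ofReal_one, ← ENNReal.ofReal_sub _ hq0.le,
                ← ENNReal.ofReal_inv_of_pos (by linarith), ← ENNReal.ofReal_mul hD.le]
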